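/- arXiv:1912.09560 — 2 statements merged into one kernel-verified Lean document; each statement's English description precedes it below -/
import Mathlib

section
/- Nonexistence of high moments of the GLMGA distribution: for all σ > 0, a > 0, b > 0 and every real r > 0 with rσ ≥ 1/2, the function y ↦ y^r f_{σ,a,b}(y) is not integrable on (0,∞). -/
open MeasureTheory Real Filter Topology

/-- The (real) beta function `B(m,n) = ∫_0^1 t^(m-1) (1-t)^(n-1) dt`. -/
noncomputable def betaFn (m n : ℝ) : ℝ :=
  ∫ t in (0:ℝ)..1, t ^ (m - 1) * (1 - t) ^ (n - 1)

/-- The regularized incomplete beta function `I_{m,n}(v)`. -/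
noncomputable def regIncBeta (m n v : ℝ) : ℝ :=
  (∫ t in (0:ℝ)..v, t ^ (m - 1) * (1 - t) ^ (n - 1)) / betaFn m n

/-- The GLMGA density `f_{σ,a,b}`. -/
noncomputable def glmga (σ a b y : ℝ) : ℝ :=
  (2 * b) ^ a / (σ * betaFn a (1 / 2)) * y ^ (-(1 / (2 * σ) + 1))
    / (y ^ (-1 / σ) + 2 * b) ^ (a + 1 / 2)

lemma rpow_le_max_aux {c x p : ℝ} (hc : 0 < c) (hcx : c ≤ x) (hx1 : x ≤ 1) :
    x ^ p ≤ max (c ^ p) 1 := by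
  rcases le_or_gt 0 p with hp | hp
  · exact le_max_of_le_right (Real.rpow_le_one (hc.le.trans hcx) hx1 hp)
  · exact le_max_of_le_left (Real.rpow_le_rpow_of_nonpos hc hcx hp.le)

lemma betaFn_integrand_intervalIntegrable {m n : ℝ} (hm : 0 < m) (hn : 0 < n) :
    IntervalIntegrable (fun t : ℝ => t ^ (m - 1) * (1 - t) ^ (n - 1)) volume 0 1 := by
  have hmeas : ∀ a b : ℝ, AEStronglyMeasurable
      (fun t : ℝ => t ^ (m - 1) * (1 - t) ^ (n - 1))
      (volume.restrict (Set.uIoc a b)) := by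
    intro a b
    refine Measurable.aestronglyMeasurable ?_
    fun_prop
  have h1 : IntervalIntegrable (fun t : ℝ => t ^ (m - 1) * (1 - t) ^ (n - 1)) volume 0 (1/2) := by
    have hbase : IntervalIntegrable (fun t : ℝ => t ^ (m - 1) * max ((1/2:ℝ) ^ (n-1)) 1)
        volume 0 (1/2) :=
      (intervalIntegral.intervalIntegrable_rpow' (by linarith)).mul_const _
    refine hbase.mono_fun (hmeas 0 (1/2)) ?_
    rw [Set.uIoc_of_le (by norm_num : (0:ℝ) ≤ 1/2)]
    filter_upwards [ae_restrict_mem measurableSet_Ioc] with t ht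
    have ht0 : 0 < t := ht.1
    have hA : (1 - t) ^ (n - 1) ≤ max ((1/2:ℝ) ^ (n-1)) 1 :=
      rpow_le_max_aux (by norm_num) (by linarith [ht.2]) (by linarith)
    have hB : 0 ≤ (1 - t) ^ (n - 1) := Real.rpow_nonneg (by linarith [ht.2]) _
    have hC : 0 ≤ t ^ (m - 1) := Real.rpow_nonneg ht0.le _
    calc ‖t ^ (m - 1) * (1 - t) ^ (n - 1)‖ = t ^ (m - 1) * (1 - t) ^ (n - 1) := by
          rw [Real.norm_eq_abs, abs_of_nonneg (mul_nonneg hC hB)]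
      _ ≤ t ^ (m - 1) * max ((1/2:ℝ) ^ (n-1)) 1 := mul_le_mul_of_nonneg_left hA hC
      _ ≤ ‖t ^ (m - 1) * max ((1/2:ℝ) ^ (n-1)) 1‖ := le_abs_self _
  have h2 : IntervalIntegrable (fun t : ℝ => t ^ (m - 1) * (1 - t) ^ (n - 1))
      volume (1/2) 1 := by
    have hbase0 : IntervalIntegrable (fun t : ℝ => t ^ (n - 1)) volume 0 (1/2) :=
      intervalIntegral.intervalIntegrable_rpow' (by linarith)
    have hbase : IntervalIntegrable (fun t : ℝ => (1 - t) ^ (n - 1)) volume (1/2) 1 := by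
      have := hbase0.comp_sub_left 1
      norm_num at this
      exact this.symm
    refine ((hbase.const_mul (max ((1/2:ℝ) ^ (m-1)) 1)).mono_fun (hmeas (1/2) 1) ?_)
    rw [Set.uIoc_of_le (by norm_num : (1:ℝ)/2 ≤ 1)]
    filter_upwards [ae_restrict_mem measurableSet_Ioc] with t ht
    have ht0 : (0:ℝ) < t := lt_trans (by norm_num) ht.1
    have hA : t ^ (m - 1) ≤ max ((1/2:ℝ) ^ (m-1)) 1 :=
      rpow_le_max_aux (by norm_num) ht.1.le ht.2
    have hB : 0 ≤ (1 - t) ^ (n - 1) := Real.rpow_nonneg (by linarith [ht.2]) _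
    have hC : 0 ≤ t ^ (m - 1) := Real.rpow_nonneg ht0.le _
    calc ‖t ^ (m - 1) * (1 - t) ^ (n - 1)‖ = t ^ (m - 1) * (1 - t) ^ (n - 1) := by
          rw [Real.norm_eq_abs, abs_of_nonneg (mul_nonneg hC hB)]
      _ ≤ max ((1/2:ℝ) ^ (m-1)) 1 * (1 - t) ^ (n - 1) := mul_le_mul_of_nonneg_right hA hB
      _ ≤ ‖max ((1/2:ℝ) ^ (m-1)) 1 * (1 - t) ^ (n - 1)‖ := le_abs_self _
  exact h1.trans h2

lemma betaFn_pos {m n : ℝ} (hm : 0 < m) (hn : 0 < n) : 0 < betaFn m n := by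
  refine intervalIntegral.intervalIntegral_pos_of_pos_on
    (betaFn_integrand_intervalIntegrable hm hn) ?_ one_pos
  intro t ht
  exact mul_pos (Real.rpow_pos_of_pos ht.1 _) (Real.rpow_pos_of_pos (by linarith [ht.2]) _)

/-- nonexistence of high moments of the GLMGA distribution. -/
theorem glmga_moment_not_integrable (σ a b r : ℝ) (hσ : 0 < σ) (ha : 0 < a) (hb : 0 < b)
    (hr : 0 < r) (hrσ : 1 / 2 ≤ r * σ) :
    ¬ IntegrableOn (fun y : ℝ => y ^ r * glmga σ a b y) (Set.Ioi 0) := by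
  intro hint
  set K : ℝ := (2 * b) ^ a / (σ * betaFn a (1 / 2)) with hK
  have hKpos : 0 < K :=
    div_pos (Real.rpow_pos_of_pos (by linarith) _)
      (mul_pos hσ (betaFn_pos ha (by norm_num)))
  set C : ℝ := K / (1 + 2 * b) ^ (a + 1 / 2) with hC
  have hCpos : 0 < C := div_pos hKpos (Real.rpow_pos_of_pos (by linarith) _)
  set p : ℝ := r - (1 / (2 * σ) + 1) with hp
  have hpge : -1 ≤ p := by
    have h1 : 1 / (2 * σ) ≤ r := by
      rw [div_le_iff₀ (by linarith)]
      linarith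
    simp only [hp]; linarith
  -- the function is bounded below by C * y ^ p on Ioi 1
  have hint1 : IntegrableOn (fun y : ℝ => y ^ r * glmga σ a b y) (Set.Ioi 1) :=
    hint.mono_set (Set.Ioi_subset_Ioi (by norm_num))
  have hbound : ∀ y : ℝ, y ∈ Set.Ioi (1:ℝ) →
      C * y ^ p ≤ y ^ r * glmga σ a b y := by
    intro y hy
    have hy1 : (1:ℝ) < y := hy
    have hy0 : (0:ℝ) < y := by linarith
    have hden0 : 0 < y ^ (-1 / σ) + 2 * b := by
      have := Real.rpow_pos_of_pos hy0 (-1 / σ); linarith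
    have hdle : (y ^ (-1 / σ) + 2 * b) ^ (a + 1/2) ≤ (1 + 2 * b) ^ (a + 1/2) := by
      apply Real.rpow_le_rpow hden0.le _ (by linarith)
      have : y ^ (-1 / σ) ≤ 1 := by
        exact Real.rpow_le_one_of_one_le_of_nonpos hy1.le
          (div_nonpos_of_nonpos_of_nonneg (by norm_num) hσ.le)
      linarith
    have hnum : 0 < K * y ^ (-(1 / (2 * σ) + 1)) :=
      mul_pos hKpos (Real.rpow_pos_of_pos hy0 _)
    have hglmga : K * y ^ (-(1 / (2 * σ) + 1)) / (1 + 2 * b) ^ (a + 1/2) ≤ glmga σ a b y := by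
      unfold glmga
      rw [← hK]
      exact div_le_div_of_nonneg_left hnum.le
        (Real.rpow_pos_of_pos hden0 _) hdle
    calc C * y ^ p = y ^ r * (K * y ^ (-(1 / (2 * σ) + 1)) / (1 + 2 * b) ^ (a + 1/2)) := by
          rw [hC, hp]
          rw [show r - (1 / (2 * σ) + 1) = r + (-(1 / (2 * σ) + 1)) by ring,
            Real.rpow_add hy0]
          ring
      _ ≤ y ^ r * glmga σ a b y := by
          exact mul_le_mul_of_nonneg_left hglmga (Real.rpow_pos_of_pos hy0 _).le
  have hCint : IntegrableOn (fun y : ℝ => C * y ^ p) (Set.Ioi 1) := by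
    refine Integrable.mono' hint1 ?_ ?_
    · refine Measurable.aestronglyMeasurable ?_
      fun_prop
    · filter_upwards [ae_restrict_mem measurableSet_Ioi] with y hy
      rw [Real.norm_eq_abs, abs_of_nonneg
        (mul_nonneg hCpos.le (Real.rpow_nonneg (by linarith [Set.mem_Ioi.mp hy]) _))]
      exact hbound y hy
  have hpint : IntegrableOn (fun y : ℝ => y ^ p) (Set.Ioi 1) := by
    have := hCint.const_mul C⁻¹
    exact (by simpa [← mul_assoc, inv_mul_cancel₀ hCpos.ne', one_mul] using this :
      Integrable (fun x : ℝ => x ^ p) (volume.restrict (Set.Ioi 1)))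
  rw [integrableOn_Ioi_rpow_iff one_pos] at hpint
  linarith
end

section
/- Variance of the GLMGA distribution: for all σ, a, b > 0 with σ < 1/4, ∫_0^∞ y² f_{σ,a,b}(y) dy − ( ∫_0^∞ y f_{σ,a,b}(y) dy )² = (2b)^{-2σ} / B(1/2,a)² · [ B(1/2 − 2σ, a + 2σ)·B(1/2, a) − B(1/2 − σ, a + σ)² ]. -/
open MeasureTheory Real Filter Topology

lemma betaFn_symm (m n : ℝ) : betaFn m n = betaFn n m := by
  have h : betaFn m n
      = ∫ t in (0:ℝ)..1, (fun x : ℝ => x ^ (n - 1) * (1 - x) ^ (m - 1)) (1 - t) := by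
    unfold betaFn
    congr 1
    ext t
    simp [sub_sub_cancel, mul_comm]
  rw [h, intervalIntegral.integral_comp_sub_left
    (fun x : ℝ => x ^ (n - 1) * (1 - x) ^ (m - 1)) 1]
  norm_num [betaFn]

/-- `∫_0^∞ t^(m-1) (t+1)^(-(m+n)) dt = B(m,n)`. -/
lemma integral_Ioi_eq_betaFn (m n : ℝ) :
    (∫ t in Set.Ioi (0:ℝ), t ^ (m - 1) * (t + 1) ^ (-(m + n))) = betaFn m n := by
  have hmeas : MeasurableSet (Set.Ioo (0:ℝ) 1) := measurableSet_Ioo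
  have hderiv : ∀ s ∈ Set.Ioo (0:ℝ) 1,
      HasDerivWithinAt (fun s : ℝ => s / (1 - s)) (((1 - s) ^ 2)⁻¹)
        (Set.Ioo (0:ℝ) 1) s := by
    intro s hs
    have h1 : (1 : ℝ) - s ≠ 0 := by have := hs.2; intro h; nlinarith
    have hder := (hasDerivAt_id s).div
      ((hasDerivAt_const s (1:ℝ)).sub (hasDerivAt_id s)) h1
    simp only [id_eq] at hder
    have heq : (1 * (1 - s) - s * (0 - 1)) / (1 - s) ^ 2 = ((1 - s) ^ 2)⁻¹ := by
      field_simp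
      ring
    simp only [Pi.sub_apply, id_eq] at hder
    rw [heq] at hder
    exact hder.hasDerivWithinAt
  have hinj : Set.InjOn (fun s : ℝ => s / (1 - s)) (Set.Ioo (0:ℝ) 1) := by
    intro s hs t ht hst
    have h1 : (1 : ℝ) - s > 0 := by have := hs.2; linarith
    have h2 : (1 : ℝ) - t > 0 := by have := ht.2; linarith
    simp only at hst
    field_simp at hst
    nlinarith [hst]
  have himg : (fun s : ℝ => s / (1 - s)) '' Set.Ioo (0:ℝ) 1 = Set.Ioi (0:ℝ) := by
    ext u
    constructor
    · rintro ⟨s, hs, rfl⟩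
      have h1 : (1 : ℝ) - s > 0 := by have := hs.2; linarith
      exact div_pos hs.1 h1
    · intro hu
      have hu0 : (0:ℝ) < u := hu
      refine ⟨u / (1 + u), ⟨div_pos hu0 (by linarith), ?_⟩, ?_⟩
      · rw [div_lt_one (by linarith)]; linarith
      · have h1 : (1 : ℝ) + u ≠ 0 := by positivity
        simp only
        field_simp
        ring
  have key := integral_image_eq_integral_abs_deriv_smul hmeas hderiv hinj
    (fun t : ℝ => t ^ (m - 1) * (t + 1) ^ (-(m + n)))
  rw [himg] at key
  rw [key]
  have hcong : ∀ s ∈ Set.Ioo (0:ℝ) 1,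
      |((1 - s) ^ 2)⁻¹| • ((s / (1 - s)) ^ (m - 1) * (s / (1 - s) + 1) ^ (-(m + n)))
        = s ^ (m - 1) * (1 - s) ^ (n - 1) := by
    intro s hs
    have hs0 : (0:ℝ) < s := hs.1
    have h1 : (0 : ℝ) < 1 - s := by have := hs.2; linarith
    have hfs : s / (1 - s) + 1 = (1 - s)⁻¹ := by field_simp; ring
    have habs : |((1 - s) ^ 2)⁻¹| = (1 - s) ^ (-(2:ℝ)) := by
      rw [abs_of_pos (by positivity)]
      rw [← Real.rpow_natCast (1 - s) 2, ← Real.rpow_neg h1.le]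
      norm_num
    have hdiv : (s / (1 - s)) ^ (m - 1) = s ^ (m - 1) * (1 - s) ^ (-(m - 1)) := by
      rw [Real.div_rpow hs0.le h1.le, Real.rpow_neg h1.le, div_eq_mul_inv]
    have hinv : ((1 - s)⁻¹ : ℝ) ^ (-(m + n)) = (1 - s) ^ (m + n) := by
      rw [← Real.rpow_neg_one (1 - s), ← Real.rpow_mul h1.le]
      norm_num
    rw [habs, hdiv, hfs, hinv, smul_eq_mul]
    calc (1 - s) ^ (-(2:ℝ)) * (s ^ (m - 1) * (1 - s) ^ (-(m - 1)) * (1 - s) ^ (m + n))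
        = s ^ (m - 1) * ((1 - s) ^ (-(2:ℝ)) * ((1 - s) ^ (-(m - 1)) * (1 - s) ^ (m + n)))
          := by ring
      _ = s ^ (m - 1) * (1 - s) ^ (n - 1) := by
          rw [← Real.rpow_add h1, ← Real.rpow_add h1]
          congr 1
          ring
  rw [setIntegral_congr_fun hmeas hcong]
  rw [betaFn, intervalIntegral.integral_of_le (by norm_num : (0:ℝ) ≤ 1),
    integral_Ioc_eq_integral_Ioo]

/-- Scaled version: `∫_0^∞ x^(m-1) (x+c)^(-(m+n)) dx = c^(-n) B(m,n)` for `c > 0`. -/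
lemma integral_Ioi_scaled (m n c : ℝ) (hc : 0 < c) :
    (∫ x in Set.Ioi (0:ℝ), x ^ (m - 1) * (x + c) ^ (-(m + n)))
      = c ^ (-n) * betaFn m n := by
  have key := integral_comp_mul_left_Ioi
    (fun x : ℝ => x ^ (m - 1) * (x + c) ^ (-(m + n))) 0 hc
  simp only [mul_zero] at key
  have h2 : (∫ x in Set.Ioi (0:ℝ), (c * x) ^ (m - 1) * (c * x + c) ^ (-(m + n)))
      = ∫ x in Set.Ioi (0:ℝ), c ^ (m - 1) * c ^ (-(m + n))
          * (x ^ (m - 1) * (x + 1) ^ (-(m + n))) := by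
    refine setIntegral_congr_fun measurableSet_Ioi ?_
    intro x hx
    have hx0 : (0:ℝ) < x := hx
    simp only
    rw [show c * x + c = c * (x + 1) from by ring,
      Real.mul_rpow hc.le hx0.le, Real.mul_rpow hc.le (by positivity)]
    ring
  rw [h2, MeasureTheory.integral_const_mul, integral_Ioi_eq_betaFn] at key
  have h4 : c • (c⁻¹ • (∫ x in Set.Ioi (0:ℝ), x ^ (m - 1) * (x + c) ^ (-(m + n))))
      = c • (c ^ (m - 1) * c ^ (-(m + n)) * betaFn m n) := by rw [← key]
  rw [smul_smul, mul_inv_cancel₀ hc.ne', one_smul, smul_eq_mul] at h4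
  rw [h4]
  rw [show c * (c ^ (m - 1) * c ^ (-(m + n)) * betaFn m n)
      = c ^ (1:ℝ) * c ^ (m - 1) * c ^ (-(m + n)) * betaFn m n
    from by rw [Real.rpow_one]; ring,
    ← Real.rpow_add hc, ← Real.rpow_add hc]
  congr 2
  ring

/-- The `k`-th moment of the GLMGA distribution. -/
lemma glmga_moment (σ a b k : ℝ) (hσ : 0 < σ) (hb : 0 < b) :
    (∫ y in Set.Ioi (0:ℝ), y ^ k * glmga σ a b y)
      = (2 * b) ^ (-(k * σ)) * betaFn (1/2 - k * σ) (a + k * σ)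
          / betaFn a (1/2) := by
  have h2b : (0:ℝ) < 2 * b := by linarith
  have key := MeasureTheory.integral_comp_rpow_Ioi
    (fun y : ℝ => y ^ k * glmga σ a b y) (p := -σ) (by simpa using hσ.ne')
  rw [← key]
  have hM : ∀ x ∈ Set.Ioi (0:ℝ),
      (|(-σ)| * x ^ (-σ - 1)) • ((x ^ (-σ):ℝ) ^ k * glmga σ a b (x ^ (-σ)))
        = (2*b) ^ a / betaFn a (1/2) * (x ^ ((1/2 - k * σ) - 1)
            * (x + 2*b) ^ (-((1/2 - k*σ) + (a + k*σ)))) := by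
    intro x hx
    have hx0 : (0:ℝ) < x := hx
    have e1 : ((x ^ (-σ):ℝ)) ^ k = x ^ (-σ * k) := by
      rw [← Real.rpow_mul hx0.le]
    have e2 : ((x ^ (-σ):ℝ)) ^ (-(1 / (2*σ) + 1)) = x ^ (1/2 + σ) := by
      rw [← Real.rpow_mul hx0.le]
      congr 1
      field_simp
    have e3 : ((x ^ (-σ):ℝ)) ^ (-1 / σ) = x := by
      rw [← Real.rpow_mul hx0.le]
      rw [show -σ * (-1 / σ) = 1 from by field_simp]
      exact Real.rpow_one x
    have hx2b : (0:ℝ) < x + 2*b := by linarith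
    have hden : ((x + 2*b):ℝ) ^ (-((1/2 - k*σ) + (a + k*σ)))
        = ((x + 2*b) ^ (a + 1/2))⁻¹ := by
      rw [← Real.rpow_neg hx2b.le]
      congr 1
      ring
    have hcomb : x ^ (-σ - 1) * (x ^ (-σ * k) * x ^ (1/2 + σ))
        = x ^ ((1/2 - k * σ) - 1) := by
      rw [← Real.rpow_add hx0, ← Real.rpow_add hx0]
      congr 1
      ring
    rw [glmga, e1, e2, e3, smul_eq_mul, abs_neg, abs_of_pos hσ, hden]
    rw [show σ * x ^ (-σ - 1) * (x ^ (-σ * k)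
          * ((2*b) ^ a / (σ * betaFn a (1/2)) * x ^ (1/2 + σ) / (x + 2*b) ^ (a + 1/2)))
        = (σ * σ⁻¹) * ((2*b) ^ a / betaFn a (1/2))
          * ((x ^ (-σ - 1) * (x ^ (-σ * k) * x ^ (1/2 + σ)))
            * ((x + 2*b) ^ (a + 1/2))⁻¹)
      from by rw [div_eq_mul_inv, div_eq_mul_inv, div_eq_mul_inv, mul_inv]; ring]
    rw [mul_inv_cancel₀ hσ.ne', one_mul, hcomb]
  rw [setIntegral_congr_fun measurableSet_Ioi hM, MeasureTheory.integral_const_mul,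
    integral_Ioi_scaled _ _ _ h2b]
  have hpow : (2*b) ^ a * (2*b) ^ (-(a + k*σ)) = (2*b) ^ (-(k*σ)) := by
    rw [← Real.rpow_add h2b]
    congr 1
    ring
  rw [div_mul_eq_mul_div, ← mul_assoc, hpow]

/-- variance of the GLMGA distribution. -/
theorem glmga_variance (σ a b : ℝ) (hσ : 0 < σ) (ha : 0 < a) (hb : 0 < b)
    (hσ4 : σ < 1 / 4) :
    (∫ y in Set.Ioi (0:ℝ), y ^ 2 * glmga σ a b y) -
        (∫ y in Set.Ioi (0:ℝ), y * glmga σ a b y) ^ 2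
      = (2 * b) ^ (-(2 * σ)) / (betaFn (1 / 2) a) ^ 2 *
        (betaFn (1 / 2 - 2 * σ) (a + 2 * σ) * betaFn (1 / 2) a -
          (betaFn (1 / 2 - σ) (a + σ)) ^ 2) := by
  have h2b : (0:ℝ) < 2 * b := by linarith
  have hm2 : (∫ y in Set.Ioi (0:ℝ), y ^ 2 * glmga σ a b y)
      = (2 * b) ^ (-(2 * σ)) * betaFn (1/2 - 2 * σ) (a + 2 * σ)
          / betaFn a (1/2) := by
    have h := glmga_moment σ a b 2 hσ hb
    rw [← h]
    refine setIntegral_congr_fun measurableSet_Ioi ?_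
    intro y hy
    simp only
    rw [show ((2:ℝ)) = ((2:ℕ):ℝ) from by norm_num, Real.rpow_natCast]
  have hm1 : (∫ y in Set.Ioi (0:ℝ), y * glmga σ a b y)
      = (2 * b) ^ (-σ) * betaFn (1/2 - σ) (a + σ) / betaFn a (1/2) := by
    have h := glmga_moment σ a b 1 hσ hb
    rw [one_mul] at h
    rw [← h]
    refine setIntegral_congr_fun measurableSet_Ioi ?_
    intro y hy
    simp [Real.rpow_one]
  rw [hm2, hm1, betaFn_symm (1/2) a]
  set B := betaFn a (1/2) with hB
  set P := (2 * b) ^ (-(2 * σ)) with hP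
  set B2 := betaFn (1/2 - 2 * σ) (a + 2 * σ) with hB2
  set B1 := betaFn (1/2 - σ) (a + σ) with hB1
  have hPsq : ((2 * b) ^ (-σ) : ℝ) ^ 2 = P := by
    rw [hP, ← Real.rpow_natCast ((2*b) ^ (-σ)) 2, ← Real.rpow_mul h2b.le]
    congr 1
    push_cast
    ring
  rw [div_pow, mul_pow, hPsq]
  by_cases hBz : B = 0
  · simp [hBz]
  · field_simp
end
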